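/- Let (X,d) be a pointed discrete metric space, let r > 0 and M > 1, and set X_k = An(X, r·M^{k−1}, r·M^{k+1}) and Y_k = An(X, r·M^{k−1}, ∞) for k ≥ 1. For a function f : X → S^m (m ≥ 0) the following are equivalent: (a) the induced norm-preserving function f' : X → ℝ^{m+1}, f'(x) = |x|·f(x), is Lipschitz; (b) the sequence (M^k · Lip(f|_{Y_k}))_{k≥1} is bounded; (c) the sequence (M^k · Lip(f|_{X_k}))_{k≥1} is bounded. -/

import Mathlib

/-- A function between metric spaces is *Lipschitz* if it is `λ`-Lipschitz for some `λ ≥ 0`. -/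
def LipFun {X Y : Type*} [MetricSpace X] [MetricSpace Y] (f : X → Y) : Prop :=
  ∃ lam : ℝ, 0 ≤ lam ∧ ∀ x y, dist (f x) (f y) ≤ lam * dist x y

/-- The annulus `An(X, r, s) = {x ∈ X : r ≤ |x| < s}` in a pointed metric space. -/
def Annulus {X : Type*} [MetricSpace X] (x₀ : X) (r s : ℝ) : Set X :=
  {x | r ≤ dist x x₀ ∧ dist x x₀ < s}

/-- The infinite annulus `An(X, r, ∞) = {x ∈ X : r ≤ |x|}` in a pointed metric space. -/
def AnnulusInf {X : Type*} [MetricSpace X] (x₀ : X) (r : ℝ) : Set X :=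
  {x | r ≤ dist x x₀}

set_option maxHeartbeats 1000000 in
/-- for a function `f : X → Sᵐ` on a pointed discrete metric space, the induced
norm-preserving map `f'(x) = |x|·f(x)` is Lipschitz iff the sequence `Mᵏ·Lip(f|_{Y_k})` is
bounded, iff the sequence `Mᵏ·Lip(f|_{X_k})` is bounded, where
`X_k = An(X, r·M^{k-1}, r·M^{k+1})` and `Y_k = An(X, r·M^{k-1}, ∞)`. -/
theorem stmt_1 {X : Type*} [MetricSpace X] (x₀ : X)
    (hdisc : ∃ ε > 0, ∀ x y : X, x ≠ y → ε ≤ dist x y)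
    (r M : ℝ) (hr : 0 < r) (hM : 1 < M) (m : ℕ)
    (f : X → EuclideanSpace ℝ (Fin (m + 1))) (hf : ∀ x, ‖f x‖ = 1) :
    (LipFun (fun x : X => dist x x₀ • f x)
      ↔ ∃ C : ℝ, ∀ k : ℕ, 1 ≤ k →
          ∀ x ∈ AnnulusInf x₀ (r * M ^ (k - 1)), ∀ y ∈ AnnulusInf x₀ (r * M ^ (k - 1)),
            M ^ k * dist (f x) (f y) ≤ C * dist x y) ∧
    (LipFun (fun x : X => dist x x₀ • f x)
      ↔ ∃ C : ℝ, ∀ k : ℕ, 1 ≤ k →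
          ∀ x ∈ Annulus x₀ (r * M ^ (k - 1)) (r * M ^ (k + 1)),
            ∀ y ∈ Annulus x₀ (r * M ^ (k - 1)) (r * M ^ (k + 1)),
              M ^ k * dist (f x) (f y) ≤ C * dist x y) := by
  classical
  obtain ⟨ε, hε, hd⟩ := hdisc
  have hM0 : (0:ℝ) < M := lt_trans one_pos hM
  set F : X → EuclideanSpace ℝ (Fin (m+1)) := fun x => dist x x₀ • f x with hFdef
  have hdistf : ∀ x y : X, dist (f x) (f y) ≤ 2 := by
    intro x y
    calc dist (f x) (f y) ≤ ‖f x‖ + ‖f y‖ := dist_le_norm_add_norm _ _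
      _ = 2 := by rw [hf, hf]; norm_num
  have key_up : ∀ x y : X, dist x x₀ * dist (f x) (f y) ≤ dist (F x) (F y) + dist x y := by
    intro x y
    have e : (dist x x₀) • (f x - f y)
        = (dist x x₀ • f x - dist y x₀ • f y) + (dist y x₀ - dist x x₀) • f y := by
      rw [smul_sub, sub_smul]; abel
    have h1 : dist x x₀ * dist (f x) (f y) = ‖(dist x x₀) • (f x - f y)‖ := by
      rw [norm_smul, Real.norm_eq_abs, abs_of_nonneg dist_nonneg, dist_eq_norm]
    rw [h1, e]
    refine le_trans (norm_add_le _ _) (add_le_add ?_ ?_)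
    · rw [show F x = dist x x₀ • f x from rfl, show F y = dist y x₀ • f y from rfl,
        dist_eq_norm]
    · rw [norm_smul, Real.norm_eq_abs, hf, mul_one]
      calc |dist y x₀ - dist x x₀| ≤ dist y x := abs_dist_sub_le y x x₀
        _ = dist x y := dist_comm y x
  have key_dn : ∀ x y : X, dist (F x) (F y) ≤ dist x x₀ * dist (f x) (f y) + dist x y := by
    intro x y
    have e : (dist x x₀ • f x - dist y x₀ • f y)
        = (dist x x₀) • (f x - f y) + (dist x x₀ - dist y x₀) • f y := by
      rw [smul_sub, sub_smul]; abel
    rw [show F x = dist x x₀ • f x from rfl, show F y = dist y x₀ • f y from rfl,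
      dist_eq_norm, e]
    refine le_trans (norm_add_le _ _) (add_le_add ?_ ?_)
    · rw [norm_smul, Real.norm_eq_abs, abs_of_nonneg dist_nonneg, dist_eq_norm]
    · rw [norm_smul, Real.norm_eq_abs, hf, mul_one]
      exact abs_dist_sub_le x y x₀
  -- (a) → (b)
  have hab : LipFun F → ∃ C : ℝ, ∀ k : ℕ, 1 ≤ k →
      ∀ x ∈ AnnulusInf x₀ (r * M ^ (k - 1)), ∀ y ∈ AnnulusInf x₀ (r * M ^ (k - 1)),
        M ^ k * dist (f x) (f y) ≤ C * dist x y := by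
    rintro ⟨lam, hlam0, hlam⟩
    refine ⟨M * (lam + 1) / r, ?_⟩
    rintro k hk x hx y hy
    obtain ⟨n, rfl⟩ : ∃ n, k = n + 1 := ⟨k - 1, by omega⟩
    have hx' : r * M ^ n ≤ dist x x₀ := hx
    have h1 : r * M ^ n * dist (f x) (f y) ≤ (lam + 1) * dist x y := by
      calc r * M ^ n * dist (f x) (f y) ≤ dist x x₀ * dist (f x) (f y) :=
            mul_le_mul_of_nonneg_right hx' dist_nonneg
        _ ≤ dist (F x) (F y) + dist x y := key_up x y
        _ ≤ lam * dist x y + dist x y := add_le_add_left (hlam x y) _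
        _ = (lam + 1) * dist x y := by ring
    have h2 := mul_le_mul_of_nonneg_left h1 (le_of_lt (div_pos hM0 hr))
    calc M ^ (n+1) * dist (f x) (f y) = M / r * (r * M ^ n * dist (f x) (f y)) := by
          field_simp; ring
      _ ≤ M / r * ((lam + 1) * dist x y) := h2
      _ = M * (lam + 1) / r * dist x y := by ring
  -- (b) → (c)
  have hbc : (∃ C : ℝ, ∀ k : ℕ, 1 ≤ k →
      ∀ x ∈ AnnulusInf x₀ (r * M ^ (k - 1)), ∀ y ∈ AnnulusInf x₀ (r * M ^ (k - 1)),
        M ^ k * dist (f x) (f y) ≤ C * dist x y) →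
      ∃ C : ℝ, ∀ k : ℕ, 1 ≤ k →
      ∀ x ∈ Annulus x₀ (r * M ^ (k - 1)) (r * M ^ (k + 1)),
        ∀ y ∈ Annulus x₀ (r * M ^ (k - 1)) (r * M ^ (k + 1)),
          M ^ k * dist (f x) (f y) ≤ C * dist x y := by
    rintro ⟨C, hC⟩
    exact ⟨C, fun k hk x hx y hy => hC k hk x hx.1 y hy.1⟩
  -- (c) → (a)
  have hca : (∃ C : ℝ, ∀ k : ℕ, 1 ≤ k →
      ∀ x ∈ Annulus x₀ (r * M ^ (k - 1)) (r * M ^ (k + 1)),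
        ∀ y ∈ Annulus x₀ (r * M ^ (k - 1)) (r * M ^ (k + 1)),
          M ^ k * dist (f x) (f y) ≤ C * dist x y) → LipFun F := by
    rintro ⟨C, hC⟩
    have hC'0 : (0:ℝ) ≤ max C 0 := le_max_right _ _
    have hC' : ∀ k : ℕ, 1 ≤ k →
        ∀ x ∈ Annulus x₀ (r * M ^ (k - 1)) (r * M ^ (k + 1)),
          ∀ y ∈ Annulus x₀ (r * M ^ (k - 1)) (r * M ^ (k + 1)),
            M ^ k * dist (f x) (f y) ≤ max C 0 * dist x y := fun k hk x hx y hy =>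
      le_trans (hC k hk x hx y hy)
        (mul_le_mul_of_nonneg_right (le_max_left _ _) dist_nonneg)
    have hM1 : (0:ℝ) < M - 1 := by linarith
    have h1 : (0:ℝ) ≤ 2 / (M - 1) := by positivity
    have h2 : (0:ℝ) ≤ 2 * r / ε := by positivity
    have h3 : (0:ℝ) ≤ r * M * max C 0 := by positivity
    have hlam0 : (0:ℝ) ≤ 1 + 2 / (M - 1) + 2 * r / ε + r * M * max C 0 := by linarith
    have key : ∀ x y : X, x ≠ y → dist x x₀ ≤ dist y x₀ →
        dist (F x) (F y) ≤ (1 + 2 / (M - 1) + 2 * r / ε + r * M * max C 0) * dist x y := by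
      intro x y hxy hle
      have hεd : ε ≤ dist x y := hd x y hxy
      have hd0 : 0 < dist x y := lt_of_lt_of_le hε hεd
      have p1 : (0:ℝ) ≤ 2 / (M - 1) * dist x y := mul_nonneg h1 hd0.le
      have p2 : (0:ℝ) ≤ 2 * r / ε * dist x y := mul_nonneg h2 hd0.le
      have p3 : (0:ℝ) ≤ r * M * max C 0 * dist x y := mul_nonneg h3 hd0.le
      have hbound : dist (F x) (F y) ≤ 2 * dist x x₀ + dist x y := by
        have hk := key_dn x y
        have h2' : dist x x₀ * dist (f x) (f y) ≤ dist x x₀ * 2 :=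
          mul_le_mul_of_nonneg_left (hdistf x y) dist_nonneg
        linarith
      rcases lt_or_ge (dist x x₀) r with hxr | hxr
      · -- small norm case
        have h2r : 2 * r ≤ 2 * r / ε * dist x y := by
          rw [div_mul_eq_mul_div, le_div_iff₀ hε]
          have := mul_le_mul_of_nonneg_left hεd (by positivity : (0:ℝ) ≤ 2 * r)
          linarith
        linarith
      · -- r ≤ |x|
        have hx1 : 1 ≤ dist x x₀ / r := (one_le_div hr).2 hxr
        obtain ⟨n, hn1, hn2⟩ := exists_nat_pow_near hx1 hM
        have hn1' : r * M ^ n ≤ dist x x₀ := by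
          rw [le_div_iff₀ hr] at hn1; linarith
        have hn2' : dist x x₀ < r * M ^ (n + 1) := by
          rw [div_lt_iff₀ hr] at hn2; linarith
        have hpow : (0:ℝ) < M ^ (n + 1) := pow_pos hM0 _
        have hpow2 : M * (r * M ^ (n + 1)) = r * M ^ (n + 2) := by ring
        rcases lt_or_ge (dist y x₀) (r * M ^ (n + 2)) with hys | hyb
        · -- both in X_{n+1}
          have hxmem : x ∈ Annulus x₀ (r * M ^ n) (r * M ^ (n + 2)) := by
            refine ⟨hn1', lt_of_lt_of_le hn2' ?_⟩
            have hpp : M ^ (n+1) ≤ M ^ (n+2) := pow_le_pow_right₀ hM.le (by omega)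
            exact mul_le_mul_of_nonneg_left hpp hr.le
          have hymem : y ∈ Annulus x₀ (r * M ^ n) (r * M ^ (n + 2)) :=
            ⟨le_trans hn1' hle, hys⟩
          have hCn := hC' (n + 1) (by omega) x hxmem y hymem
          have hfb : dist x x₀ * dist (f x) (f y) ≤ r * max C 0 * dist x y := by
            have ha : dist x x₀ * dist (f x) (f y) ≤ r * M ^ (n+1) * dist (f x) (f y) :=
              mul_le_mul_of_nonneg_right (le_of_lt hn2') dist_nonneg
            have hb : r * (M ^ (n+1) * dist (f x) (f y)) ≤ r * (max C 0 * dist x y) :=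
              mul_le_mul_of_nonneg_left hCn hr.le
            nlinarith [dist_nonneg (x := f x) (y := f y)]
          have hk := key_dn x y
          have hrc : r * max C 0 * dist x y ≤ r * M * max C 0 * dist x y := by
            have hin : r * max C 0 ≤ r * M * max C 0 := by nlinarith [mul_nonneg hr.le hC'0]
            exact mul_le_mul_of_nonneg_right hin hd0.le
          linarith
        · -- |y| large: d ≥ (M-1)|x|
          have habs : dist y x₀ - dist x x₀ ≤ dist x y := by
            have h := abs_dist_sub_le y x x₀
            rw [dist_comm y x] at h
            exact le_trans (le_abs_self _) h
          have hMx : M * dist x x₀ ≤ dist y x₀ := by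
            have := mul_le_mul_of_nonneg_left hn2'.le hM0.le
            linarith
          have hxd : (M - 1) * dist x x₀ ≤ dist x y := by nlinarith [dist_nonneg (x := x) (y := x₀)]
          have h2A : 2 * dist x x₀ ≤ 2 / (M - 1) * dist x y := by
            have hmul := mul_le_mul_of_nonneg_left hxd (by positivity : (0:ℝ) ≤ 2 / (M - 1))
            have heq : 2 / (M - 1) * ((M - 1) * dist x x₀) = 2 * dist x x₀ := by
              field_simp
            linarith
          linarith
    refine ⟨1 + 2 / (M - 1) + 2 * r / ε + r * M * max C 0, hlam0, fun x y => ?_⟩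
    rcases eq_or_ne x y with rfl | hxy
    · simp [mul_nonneg hlam0 dist_nonneg]
    rcases le_total (dist x x₀) (dist y x₀) with h | h
    · exact key x y hxy h
    · rw [dist_comm (F x) (F y), dist_comm x y]
      exact key y x (Ne.symm hxy) h
  exact ⟨⟨hab, fun h => hca (hbc h)⟩, ⟨fun h => hbc (hab h), hca⟩⟩
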